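/- Consider the multi-choice Shapley value with linear weights: ψ_{i,k}(v) = ∑_{j=1}^{i} ∑_{τ : τ_k = j, τ ≠ 0} [∑_{T ⊆ M_k(τ)} (-1)^{|T|} j/(|τ|+|T|)] · [v(|τ|) − v(|τ|−1)], where the value function v depends only on the total data size |τ|. If an agent k holding i = T + T' samples splits into two identities k₁ and k₂ contributing T and T' samples respectively, and v : ℕ → ℝ is linear (v(n) = v₀ n + b), then ψ_{T,k₁}(v) + ψ_{T',k₂}(v) = ψ_{T+T',k}(v). -/

import Mathlib

open Finset

/-- Multi-choice Shapley value with linear weights, for a game with `K` players,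
maximum-data vector `m`, where the value function depends only on the total data size:
`ψ_{i,k}(v) = ∑_{j=1}^{i} ∑_{τ : τ_k = j, τ ≠ 0}
  [∑_{S ⊆ M_k(τ)} (-1)^{|S|} j/(|τ|+|S|)] · (v(|τ|) − v(|τ|−1))`,
with `M_k(τ) = {a : τ_a ≠ m_a, a ≠ k}` and `|τ| = ∑_a τ_a`. -/
noncomputable def mcflShapley {K : ℕ} (m : Fin K → ℕ) (k : Fin K) (i : ℕ) (v : ℕ → ℝ) : ℝ :=
  ∑ j ∈ Finset.Icc 1 i,
    ∑ τ : ((a : Fin K) → Fin (m a + 1)),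
      if (τ k : ℕ) = j ∧ (∃ a, (τ a : ℕ) ≠ 0) then
        (∑ S ∈ (Finset.univ.filter (fun a => (τ a : ℕ) ≠ m a ∧ a ≠ k)).powerset,
            (-1 : ℝ) ^ S.card * (j : ℝ) / ((∑ a, (τ a : ℕ) : ℕ) + S.card)) *
          (v (∑ a, (τ a : ℕ)) - v ((∑ a, (τ a : ℕ)) - 1))
      else 0

lemma powersetSum {α : Type*} [DecidableEq α] (A : Finset α) (x : ℝ) :
    ∑ S ∈ A.powerset, (-x)^S.card = (1-x)^A.card := by
  have := Finset.prod_add (fun _ : α => -x) (fun _ => 1) A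
  simp [Finset.prod_const] at this
  rw [← this]; ring_nf

lemma mcflPointwise {K : ℕ} (m : Fin K → ℕ) (k : Fin K) (j : ℕ) (hj : j ≤ m k) (x : ℝ) :
    ∑ τ : ((a : Fin K) → Fin (m a + 1)),
      (if (τ k : ℕ) = j then
        x ^ (∑ a ∈ univ.erase k, (τ a : ℕ)) *
          (1-x) ^ ((univ.filter (fun a => (τ a : ℕ) ≠ m a ∧ a ≠ k)).card)
      else 0) = 1 := by
  classical
  set f : (a : Fin K) → Fin (m a + 1) → ℝ :=
    fun a t => if a = k then (if (t:ℕ) = j then 1 else 0)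
               else (if (t:ℕ) = m a then 1 else (1-x)) * x^(t:ℕ) with hf
  have step1 : ∀ τ : ((a : Fin K) → Fin (m a + 1)),
      (if (τ k : ℕ) = j then
        x ^ (∑ a ∈ univ.erase k, (τ a : ℕ)) *
          (1-x) ^ ((univ.filter (fun a => (τ a : ℕ) ≠ m a ∧ a ≠ k)).card)
      else 0) = ∏ a, f a (τ a) := by
    intro τ
    by_cases h : (τ k : ℕ) = j
    · rw [if_pos h, ← Finset.prod_erase_mul _ _ (mem_univ k)]
      have hk : f k (τ k) = 1 := by simp [hf, h]
      rw [hk, mul_one]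
      have : ∀ a ∈ univ.erase k, f a (τ a)
          = (if (τ a:ℕ) = m a then (1:ℝ) else (1-x)) * x^(τ a:ℕ) := by
        intro a ha
        rw [mem_erase] at ha
        simp [hf, ha.1]
      rw [Finset.prod_congr rfl this, Finset.prod_mul_distrib,
        Finset.prod_pow_eq_pow_sum, Finset.prod_ite]
      have hcard : ((univ.erase k).filter (fun a => ¬ (τ a:ℕ) = m a))
          = (univ.filter (fun a => (τ a : ℕ) ≠ m a ∧ a ≠ k)) := by
        ext a; simp [mem_erase, and_comm]
      simp only [Finset.prod_const, Finset.prod_const_one, one_mul, hcard]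
      ring
    · rw [if_neg h]
      exact (Finset.prod_eq_zero (mem_univ k) (by simp [hf, h])).symm
  rw [Finset.sum_congr rfl (fun τ _ => step1 τ)]
  rw [← Fintype.piFinset_univ, ← Finset.prod_univ_sum]
  rw [Finset.prod_eq_one]
  intro a _
  by_cases ha : a = k
  · subst ha
    have hrw : ∀ t : Fin (m a + 1), ((t:ℕ) = j) = (t = ⟨j, by omega⟩) := by
      intro t; simp [Fin.ext_iff]
    simp only [hf, if_pos rfl]
    simp_rw [hrw]
    rw [Finset.sum_ite_eq' univ (⟨j, by omega⟩ : Fin (m a + 1)) (fun _ => (1:ℝ))]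
    simp
  · simp only [hf, if_neg ha]
    rw [Fin.sum_univ_castSucc]
    have hlast : ((Fin.last (m a) : Fin (m a + 1)) : ℕ) = m a := rfl
    have hcs : ∀ i : Fin (m a), ¬ ((Fin.castSucc i : Fin (m a + 1)) : ℕ) = m a := by
      intro i; simpa [Fin.castSucc] using i.isLt.ne
    rw [hlast, if_pos rfl, one_mul]
    have : ∀ i ∈ (univ : Finset (Fin (m a))),
        (if ((Fin.castSucc i : Fin (m a+1)):ℕ) = m a then (1:ℝ) else (1-x))
          * x ^ ((Fin.castSucc i : Fin (m a+1)):ℕ) = (1-x) * x ^ (i:ℕ) := by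
      intro i _; rw [if_neg (hcs i)]; rfl
    rw [Finset.sum_congr rfl this, ← Finset.mul_sum, Fin.sum_univ_eq_sum_range]
    have hg := geom_sum_mul x (m a)
    linear_combination -hg

lemma mcflWeightSum {K : ℕ} (m : Fin K → ℕ) (k : Fin K) (j : ℕ) (hj1 : 1 ≤ j) (hj2 : j ≤ m k) :
    ∑ τ : ((a : Fin K) → Fin (m a + 1)),
      (if (τ k : ℕ) = j then
        ∑ S ∈ (univ.filter (fun a => (τ a : ℕ) ≠ m a ∧ a ≠ k)).powerset,
          (-1 : ℝ) ^ S.card * (j : ℝ) / (((∑ a, (τ a : ℕ) : ℕ) : ℝ) + (S.card : ℝ))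
      else 0) = 1 := by
  classical
  set g : ((a : Fin K) → Fin (m a + 1)) → ℝ → ℝ := fun τ x =>
    (j:ℝ) * x^(j-1) *
      (if (τ k : ℕ) = j then
        x ^ (∑ a ∈ univ.erase k, (τ a : ℕ)) *
          (1-x) ^ ((univ.filter (fun a => (τ a : ℕ) ≠ m a ∧ a ≠ k)).card)
      else 0) with hg
  have hgint : ∀ τ, IntervalIntegrable (g τ) MeasureTheory.volume (0:ℝ) 1 := by
    intro τ
    apply Continuous.intervalIntegrable
    by_cases h : (τ k : ℕ) = j <;> simp only [hg, if_pos, if_neg, h] <;> continuity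
  have step : ∀ τ : ((a : Fin K) → Fin (m a + 1)),
      (if (τ k : ℕ) = j then
        ∑ S ∈ (univ.filter (fun a => (τ a : ℕ) ≠ m a ∧ a ≠ k)).powerset,
          (-1 : ℝ) ^ S.card * (j : ℝ) / (((∑ a, (τ a : ℕ) : ℕ) : ℝ) + (S.card : ℝ))
      else 0) = ∫ x in (0:ℝ)..1, g τ x := by
    intro τ
    by_cases h : (τ k : ℕ) = j
    · rw [if_pos h]
      set r : ℕ := ∑ a ∈ univ.erase k, (τ a : ℕ) with hr
      set A := univ.filter (fun a => (τ a : ℕ) ≠ m a ∧ a ≠ k) with hA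
      have hn : (∑ a, (τ a : ℕ)) = j + r := by
        rw [hr, ← h, ← Finset.add_sum_erase _ _ (mem_univ k)]
      have term : ∀ S ∈ A.powerset,
          (-1 : ℝ) ^ S.card * (j : ℝ) / (((∑ a, (τ a : ℕ) : ℕ) : ℝ) + (S.card : ℝ))
            = ∫ x in (0:ℝ)..1, (j:ℝ) * x^(j-1) * ((-x)^S.card * x^r) := by
        intro S _
        have heq : (fun x : ℝ => (j:ℝ) * x^(j-1) * ((-x)^S.card * x^r))
            = fun x : ℝ => ((-1:ℝ)^S.card * (j:ℝ)) * x^(j-1+r+S.card) := by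
          funext x; rw [pow_add, pow_add]; ring
        rw [heq, intervalIntegral.integral_const_mul, integral_pow]
        have hc : ((j - 1 + r + S.card : ℕ) : ℝ) + 1
            = ((∑ a, (τ a : ℕ) : ℕ) : ℝ) + (S.card : ℝ) := by
          rw [hn]; push_cast [Nat.cast_sub hj1]; ring
        rw [hc]; norm_num; ring
      rw [Finset.sum_congr rfl term,
        ← intervalIntegral.integral_finset_sum
          (fun S _ => Continuous.intervalIntegrable (by continuity) _ _)]
      apply intervalIntegral.integral_congr
      intro x _
      simp only [hg, if_pos h]
      calc ∑ S ∈ A.powerset, (j:ℝ) * x^(j-1) * ((-x)^S.card * x^r)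
          = ∑ S ∈ A.powerset, (j:ℝ) * x^(j-1) * x^r * (-x)^S.card :=
            Finset.sum_congr rfl (fun S _ => by ring)
        _ = (j:ℝ) * x^(j-1) * x^r * ∑ S ∈ A.powerset, (-x)^S.card := by
            rw [Finset.mul_sum]
        _ = (j:ℝ) * x^(j-1) * (x^r * (1-x)^A.card) := by rw [powersetSum]; ring
    · rw [if_neg h]
      simp [hg, if_neg h]
  rw [Finset.sum_congr rfl (fun τ _ => step τ),
    ← intervalIntegral.integral_finset_sum (fun τ _ => hgint τ)]
  have : (fun x : ℝ => ∑ τ : ((a : Fin K) → Fin (m a + 1)), g τ x)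
      = fun x : ℝ => (j:ℝ) * x^(j-1) := by
    funext x
    simp only [hg, ← Finset.mul_sum]
    rw [mcflPointwise m k j hj2 x, mul_one]
  rw [intervalIntegral.integral_congr (fun x _ => congrFun this x),
    intervalIntegral.integral_const_mul, integral_pow]
  have : ((j - 1 : ℕ) : ℝ) + 1 = (j : ℝ) := by push_cast [Nat.cast_sub hj1]; ring
  rw [this]
  field_simp
  simp

lemma mcflLinear {K : ℕ} (m : Fin K → ℕ) (k : Fin K) (v : ℕ → ℝ) (v₀ b : ℝ)
    (hv : ∀ n, v n = v₀ * n + b) :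
    mcflShapley m k (m k) v = v₀ * (m k) := by
  classical
  unfold mcflShapley
  have step : ∀ j ∈ Finset.Icc 1 (m k),
      (∑ τ : ((a : Fin K) → Fin (m a + 1)),
        if (τ k : ℕ) = j ∧ (∃ a, (τ a : ℕ) ≠ 0) then
          (∑ S ∈ (Finset.univ.filter (fun a => (τ a : ℕ) ≠ m a ∧ a ≠ k)).powerset,
              (-1 : ℝ) ^ S.card * (j : ℝ) / ((∑ a, (τ a : ℕ) : ℕ) + S.card)) *
            (v (∑ a, (τ a : ℕ)) - v ((∑ a, (τ a : ℕ)) - 1))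
        else 0) = v₀ := by
    intro j hj
    rw [Finset.mem_Icc] at hj
    have hτ : ∀ τ : ((a : Fin K) → Fin (m a + 1)),
        (if (τ k : ℕ) = j ∧ (∃ a, (τ a : ℕ) ≠ 0) then
          (∑ S ∈ (Finset.univ.filter (fun a => (τ a : ℕ) ≠ m a ∧ a ≠ k)).powerset,
              (-1 : ℝ) ^ S.card * (j : ℝ) / ((∑ a, (τ a : ℕ) : ℕ) + S.card)) *
            (v (∑ a, (τ a : ℕ)) - v ((∑ a, (τ a : ℕ)) - 1))
        else 0)
        = (if (τ k : ℕ) = j then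
            ∑ S ∈ (Finset.univ.filter (fun a => (τ a : ℕ) ≠ m a ∧ a ≠ k)).powerset,
              (-1 : ℝ) ^ S.card * (j : ℝ) / (((∑ a, (τ a : ℕ) : ℕ) : ℝ) + (S.card : ℝ))
          else 0) * v₀ := by
      intro τ
      by_cases h : (τ k : ℕ) = j
      · have hex : ∃ a, (τ a : ℕ) ≠ 0 := ⟨k, by omega⟩
        rw [if_pos ⟨h, hex⟩, if_pos h]
        have hn1 : 1 ≤ ∑ a, (τ a : ℕ) := by
          calc 1 ≤ (τ k : ℕ) := by omega
            _ ≤ ∑ a, (τ a : ℕ) :=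
              Finset.single_le_sum (f := fun a => (τ a : ℕ))
                (fun a _ => Nat.zero_le _) (Finset.mem_univ k)
        have hvdiff : v (∑ a, (τ a : ℕ)) - v ((∑ a, (τ a : ℕ)) - 1) = v₀ := by
          rw [hv, hv, Nat.cast_sub hn1]; ring
        rw [hvdiff]
      · rw [if_neg (fun hc => h hc.1), if_neg h, zero_mul]
    rw [Finset.sum_congr rfl (fun τ _ => hτ τ), ← Finset.sum_mul,
      mcflWeightSum m k j hj.1 hj.2, one_mul]
  rw [Finset.sum_congr rfl step, Finset.sum_const, Nat.card_Icc]
  simp [mul_comm]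

/-- If the value function is linear, splitting `i = T + T'` samples between two
false-name identities (in the `(K+2)`-player game with maxima `(T, T', others)`)
yields exactly the honest payoff of agent `k` in the `(K+1)`-player game with maxima
`(T+T', others)`. -/
theorem shapley_split_eq_of_linear (K : ℕ) (others : Fin K → ℕ) (T T' : ℕ)
    (hT : 1 ≤ T) (hT' : 1 ≤ T') (v : ℕ → ℝ) (v₀ b : ℝ)
    (hv : ∀ n, v n = v₀ * n + b) :
    mcflShapley (Fin.cons T (Fin.cons T' others)) 0 T v
      + mcflShapley (Fin.cons T (Fin.cons T' others)) 1 T' v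
      = mcflShapley (Fin.cons (T + T') others) 0 (T + T') v := by
  have h0 : (Fin.cons T (Fin.cons T' others) : Fin (K+2) → ℕ) 0 = T := rfl
  have h1 : (Fin.cons T (Fin.cons T' others) : Fin (K+2) → ℕ) 1 = T' := by
    rw [← Fin.succ_zero_eq_one, Fin.cons_succ, Fin.cons_zero]
  have h2 : (Fin.cons (T + T') others : Fin (K+1) → ℕ) 0 = T + T' := rfl
  have e0 := mcflLinear (Fin.cons T (Fin.cons T' others) : Fin (K+2) → ℕ) 0 v v₀ b hv
  have e1 := mcflLinear (Fin.cons T (Fin.cons T' others) : Fin (K+2) → ℕ) 1 v v₀ b hv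
  have e2 := mcflLinear (Fin.cons (T + T') others : Fin (K+1) → ℕ) 0 v v₀ b hv
  rw [h0] at e0; rw [h1] at e1; rw [h2] at e2
  rw [e0, e1, e2]
  push_cast; ring
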